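/- Let n = 2k+1 with k ≥ 1 and let 1 ≤ r ≤ k. Define the vector v indexed by the vertices of the middle-cube M_n by v(A) = f(A). Then M v = (k+1−r) · v, where M is the adjacency matrix of M_n; that is, v lies in the eigenspace of M for the eigenvalue k+1−r. -/

import Mathlib

open Finset

/-- Vertices of the middle-cube `M_n` (with `n = 2k+1`): subsets of `S = {1,…,n}`
(modeled as `Fin n`) of cardinality `k` or `k+1`. -/
abbrev MidVert (n k : ℕ) := {A : Finset (Fin n) // A.card = k ∨ A.card = k + 1}

/-- Adjacency matrix of the middle-cube: two distinct vertices `A`, `B` are adjacent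
iff `A ⊂ B` or `B ⊂ A`. -/
def midAdj (n k : ℕ) : Matrix (MidVert n k) (MidVert n k) ℝ :=
  fun A B => if A.1 ⊂ B.1 ∨ B.1 ⊂ A.1 then 1 else 0

-- helper: sum over erasures
lemma sum_erase_f {n r : ℕ} (g : Finset (Fin n) → ℝ) (A : Finset (Fin n)) (hr : r ≤ A.card) :
    ∑ i ∈ A, ∑ C ∈ (A.erase i).powersetCard r, g C
      = ((A.card - r : ℕ) : ℝ) * ∑ C ∈ A.powersetCard r, g C := by
  have key : ∀ i ∈ A, (A.erase i).powersetCard r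
      = (A.powersetCard r).filter (fun C => i ∉ C) := by
    intro i _
    ext C
    simp only [mem_powersetCard, mem_filter, Finset.subset_erase]
    tauto
  calc ∑ i ∈ A, ∑ C ∈ (A.erase i).powersetCard r, g C
      = ∑ i ∈ A, ∑ C ∈ A.powersetCard r, if i ∉ C then g C else 0 := by
        refine Finset.sum_congr rfl fun i hi => ?_
        rw [key i hi, Finset.sum_filter]
    _ = ∑ C ∈ A.powersetCard r, ∑ i ∈ A, if i ∉ C then g C else 0 := Finset.sum_comm
    _ = ∑ C ∈ A.powersetCard r, ((A.card - r : ℕ) : ℝ) * g C := by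
        refine Finset.sum_congr rfl fun C hC => ?_
        rw [← Finset.sum_filter, Finset.sum_const, nsmul_eq_mul]
        congr 2
        rw [mem_powersetCard] at hC
        rw [← Finset.sdiff_eq_filter, Finset.card_sdiff_of_subset hC.1, hC.2]
    _ = _ := by rw [← Finset.mul_sum]

-- helper: double counting
lemma sum_pairs {n r : ℕ} (g : Finset (Fin n) → ℝ) (A : Finset (Fin n)) :
    ∑ D ∈ A.powersetCard r, ∑ i ∈ A \ D, g (insert i D)
      = ∑ C ∈ A.powersetCard (r+1), ∑ _i ∈ C, g C := by
  rw [Finset.sum_sigma', Finset.sum_sigma']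
  refine Finset.sum_nbij' (fun p => ⟨insert p.2 p.1, p.2⟩) (fun q => ⟨q.1.erase q.2, q.2⟩)
    ?_ ?_ ?_ ?_ ?_
  · rintro ⟨D, i⟩ hp
    simp only [Finset.mem_sigma, mem_powersetCard, mem_sdiff] at hp ⊢
    refine ⟨⟨insert_subset hp.2.1 hp.1.1, ?_⟩, mem_insert_self _ _⟩
    rw [Finset.card_insert_of_notMem hp.2.2, hp.1.2]
  · rintro ⟨C, i⟩ hq
    simp only [Finset.mem_sigma, mem_powersetCard, mem_sdiff] at hq ⊢
    refine ⟨⟨(erase_subset _ _).trans hq.1.1, ?_⟩, hq.1.1 hq.2, notMem_erase _ _⟩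
    rw [Finset.card_erase_of_mem hq.2, hq.1.2]; rfl
  · rintro ⟨D, i⟩ hp
    simp only [Finset.mem_sigma, mem_powersetCard, mem_sdiff] at hp
    simp [Finset.erase_insert hp.2.2]
  · rintro ⟨C, i⟩ hq
    simp only [Finset.mem_sigma, mem_powersetCard, mem_sdiff] at hq
    simp [Finset.insert_erase hq.2]
  · rintro ⟨D, i⟩ hp
    rfl


/-- Let `n = 2k+1` with `k ≥ 1` and `1 ≤ r ≤ k`, and let `g` assign a real number to
each `r`-subset of `S` such that for every `(r−1)`-subset `R` of `S`,
`∑_{i ∈ S∖R} g(R ∪ {i}) = 0`. Then the vector `v` indexed by the vertices of the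
middle-cube with `v(A) = f(A) = ∑_{B ⊆ A, |B| = r} g(B)` satisfies
`M v = (k+1−r)·v`, i.e. `v` lies in the eigenspace of `M` for eigenvalue `k+1−r`. -/
theorem middle_cube_eigenvector (k r : ℕ) (hk : 1 ≤ k) (hr : 1 ≤ r) (hrk : r ≤ k)
    (g : Finset (Fin (2 * k + 1)) → ℝ)
    (hg : ∀ R : Finset (Fin (2 * k + 1)), R.card = r - 1 →
      ∑ i ∈ Rᶜ, g (insert i R) = 0) :
    (midAdj (2 * k + 1) k).mulVec
        (fun A : MidVert (2 * k + 1) k => ∑ B ∈ A.1.powersetCard r, g B) =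
      ((k : ℝ) + 1 - r) •
        (fun A : MidVert (2 * k + 1) k => ∑ B ∈ A.1.powersetCard r, g B) := by
  classical
  funext A
  simp only [Matrix.mulVec, dotProduct, midAdj, Pi.smul_apply, smul_eq_mul, boole_mul]
  rw [← Finset.sum_filter]
  rcases A.2 with hA | hA
  · -- card A = k : neighbors are insertions
    have hstep : (Finset.univ.filter
        (fun B : MidVert (2*k+1) k => A.1 ⊂ B.1 ∨ B.1 ⊂ A.1)).sum
          (fun B => ∑ C ∈ B.1.powersetCard r, g C)
        = ∑ i ∈ A.1ᶜ, ∑ C ∈ (insert i A.1).powersetCard r, g C := by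
      symm
      refine Finset.sum_bij (fun i hi => (⟨insert i A.1, Or.inr ?_⟩ : MidVert (2*k+1) k))
        ?_ ?_ ?_ ?_
      · rw [Finset.card_insert_of_notMem (by simpa using hi), hA]
      · intro i hi
        simp only [Finset.mem_filter, Finset.mem_univ, true_and]
        exact Or.inl (Finset.ssubset_insert (by simpa using hi))
      · intro i hi j hj hij
        have : insert i A.1 = insert j A.1 := congrArg Subtype.val hij
        by_contra hne
        have hi' : i ∉ A.1 := by simpa using hi
        have : i ∈ insert j A.1 := this ▸ mem_insert_self i A.1
        rcases Finset.mem_insert.mp this with h | h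
        · exact hne h
        · exact hi' h
      · rintro ⟨B, hB⟩ hmem
        simp only [Finset.mem_filter, Finset.mem_univ, true_and] at hmem
        rcases hmem with hsub | hsub
        · -- A ⊂ B, so card B = k+1, B = insert i A
          have hcard : B.card = k + 1 := by
            rcases hB with h | h
            · exfalso
              have := Finset.card_lt_card hsub
              omega
            · exact h
          obtain ⟨i, hiB, hiA⟩ := Finset.exists_of_ssubset hsub
          refine ⟨i, by simpa using hiA, ?_⟩
          have h1 : insert i A.1 ⊆ B := Finset.insert_subset hiB hsub.1
          have h2 : B.card ≤ (insert i A.1).card := by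
            rw [Finset.card_insert_of_notMem hiA, hA, hcard]
          ext : 1
          exact Finset.eq_of_subset_of_card_le h1 h2
        · exfalso
          have := Finset.card_lt_card hsub
          rcases hB with h | h <;> omega
      · intro i hi; rfl
    rw [hstep]
    -- now expand insert
    obtain ⟨r', rfl⟩ : ∃ r', r = r' + 1 := ⟨r - 1, by omega⟩
    have hins : ∀ i ∈ A.1ᶜ, ∑ C ∈ (insert i A.1).powersetCard (r'+1), g C
        = (∑ C ∈ A.1.powersetCard (r'+1), g C)
          + ∑ D ∈ A.1.powersetCard r', g (insert i D) := by
      intro i hi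
      have hi' : i ∉ A.1 := by simpa using hi
      rw [Finset.powersetCard_succ_insert hi' r']
      rw [Finset.sum_union, Finset.sum_image]
      · intro x hx y hy hxy
        rw [Finset.mem_coe, mem_powersetCard] at hx hy
        have hx' : i ∉ x := fun h => hi' (hx.1 h)
        have hy' : i ∉ y := fun h => hi' (hy.1 h)
        rw [← Finset.erase_insert hx', ← Finset.erase_insert hy', hxy]
      · rw [Finset.disjoint_left]
        intro C hC hC'
        rw [mem_powersetCard] at hC
        obtain ⟨D, hD, rfl⟩ := Finset.mem_image.mp hC'
        exact hi' (hC.1 (mem_insert_self _ _))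
    rw [Finset.sum_congr rfl hins, Finset.sum_add_distrib, Finset.sum_const, nsmul_eq_mul]
    have hAcc : A.1ᶜ.card = k + 1 := by
      rw [Finset.card_compl, hA]
      simp [Fintype.card_fin]
      omega
    rw [hAcc]
    -- second sum
    have hsec : ∑ i ∈ A.1ᶜ, ∑ D ∈ A.1.powersetCard r', g (insert i D)
        = - ((r' + 1 : ℕ) : ℝ) * ∑ C ∈ A.1.powersetCard (r'+1), g C := by
      rw [Finset.sum_comm]
      have step1 : ∀ D ∈ A.1.powersetCard r',
          ∑ i ∈ A.1ᶜ, g (insert i D) = - ∑ i ∈ A.1 \ D, g (insert i D) := by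
        intro D hD
        rw [mem_powersetCard] at hD
        have hDc : Dᶜ = A.1ᶜ ∪ (A.1 \ D) := by
          ext x
          simp only [Finset.mem_compl, Finset.mem_union, mem_sdiff]
          by_cases hx : x ∈ A.1
          · simp [hx]
          · constructor
            · intro h; exact Or.inl hx
            · rintro (h | ⟨h, h'⟩)
              · intro hxD; exact hx (hD.1 hxD)
              · exact absurd h hx
        have hdisj : Disjoint (A.1ᶜ) (A.1 \ D) := by
          rw [Finset.disjoint_left]
          intro x hx hx'
          exact (Finset.mem_compl.mp hx) (Finset.mem_sdiff.mp hx').1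
        have := hg D (by rw [hD.2]; omega)
        rw [hDc, Finset.sum_union hdisj] at this
        linarith
      rw [Finset.sum_congr rfl step1, Finset.sum_neg_distrib]
      rw [sum_pairs g A.1]
      rw [neg_mul, neg_inj]
      rw [Finset.mul_sum]
      refine Finset.sum_congr rfl fun C hC => ?_
      rw [mem_powersetCard] at hC
      rw [Finset.sum_const, nsmul_eq_mul, hC.2]
    rw [hsec]
    push_cast
    ring
  · -- card A = k+1 : neighbors are erasures
    have hstep : (Finset.univ.filter
        (fun B : MidVert (2*k+1) k => A.1 ⊂ B.1 ∨ B.1 ⊂ A.1)).sum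
          (fun B => ∑ C ∈ B.1.powersetCard r, g C)
        = ∑ i ∈ A.1, ∑ C ∈ (A.1.erase i).powersetCard r, g C := by
      symm
      refine Finset.sum_bij (fun i hi => (⟨A.1.erase i, Or.inl ?_⟩ : MidVert (2*k+1) k))
        ?_ ?_ ?_ ?_
      · rw [Finset.card_erase_of_mem hi, hA]; omega
      · intro i hi
        simp only [Finset.mem_filter, Finset.mem_univ, true_and]
        exact Or.inr (Finset.erase_ssubset hi)
      · intro i hi j hj hij
        have : A.1.erase i = A.1.erase j := congrArg Subtype.val hij
        exact (Finset.erase_inj A.1 hi).mp this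
      · rintro ⟨B, hB⟩ hmem
        simp only [Finset.mem_filter, Finset.mem_univ, true_and] at hmem
        rcases hmem with hsub | hsub
        · exfalso
          have := Finset.card_lt_card hsub
          rcases hB with h | h <;> omega
        · have hcard : B.card = k := by
            have := Finset.card_lt_card hsub
            rcases hB with h | h <;> omega
          obtain ⟨i, hiA, hiB⟩ := Finset.exists_of_ssubset hsub
          refine ⟨i, hiA, ?_⟩
          have h1 : B ⊆ A.1.erase i := Finset.subset_erase.mpr ⟨hsub.1, hiB⟩
          have h2 : (A.1.erase i).card ≤ B.card := by
            rw [Finset.card_erase_of_mem hiA, hA, hcard]; omega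
          ext : 1
          exact (Finset.eq_of_subset_of_card_le h1 h2).symm
      · intro i hi; rfl
    rw [hstep, sum_erase_f g A.1 (by omega), hA]
    have : ((k + 1 - r : ℕ) : ℝ) = (k : ℝ) + 1 - r := by
      push_cast [Nat.cast_sub (by omega : r ≤ k + 1)]
      ring
    rw [this]
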